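/- Let (M,d) be a metric space, α ≥ 1, V ⊆ M a set of diameter at most Δ with Δ > 0, and t ∈ V. Let C ⊆ V be a (Δ/(8(α+1)))-cover of V, i.e. for every v ∈ V there exists c ∈ C with d(v,c) ≤ Δ/(8(α+1)). Suppose c_i ∈ C satisfies: for every c_j ∈ C with d(c_i,c_j) > Δ/8 one has d(t,c_i) ≤ α·d(t,c_j). Then d(t,c_i) ≤ Δ·(α+2)/(8(α+1)). -/
import Mathlib

theorem stmt_4 {M : Type*} [MetricSpace M] (α : ℝ) (hα : 1 ≤ α)
    (V : Set M) (Δ : ℝ) (hΔ : 0 < Δ)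
    (hdiam : ∀ p ∈ V, ∀ q ∈ V, dist p q ≤ Δ)
    (t : M) (ht : t ∈ V) (C : Set M) (hCV : C ⊆ V)
    (hcover : ∀ v ∈ V, ∃ c ∈ C, dist v c ≤ Δ / (8 * (α + 1)))
    (ci : M) (hci : ci ∈ C)
    (hwin : ∀ cj ∈ C, dist ci cj > Δ / 8 → dist t ci ≤ α * dist t cj) :
    dist t ci ≤ Δ * (α + 2) / (8 * (α + 1)) := by
  obtain ⟨c, hcC, hc⟩ := hcover t ht
  have hα1 : (0:ℝ) < α + 1 := by linarith
  by_cases h : dist ci c ≤ Δ / 8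
  · have : dist t ci ≤ dist t c + dist c ci := dist_triangle t c ci
    rw [dist_comm c ci] at this
    have : dist t ci ≤ Δ / (8 * (α + 1)) + Δ / 8 := by linarith
    rw [div_add_div _ _ (by positivity) (by positivity : (8:ℝ) ≠ 0)] at this
    calc dist t ci ≤ (Δ * 8 + 8 * (α + 1) * Δ) / (8 * (α + 1) * 8) := this
      _ = Δ * (α + 2) / (8 * (α + 1)) := by field_simp; ring
  · have h2 := hwin c hcC (lt_of_not_ge h)
    have : dist t ci ≤ α * (Δ / (8 * (α + 1))) := by
      refine h2.trans ?_
      exact mul_le_mul_of_nonneg_left hc (by linarith)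
    refine this.trans ?_
    rw [mul_div_assoc', div_le_div_iff₀ (by positivity) (by positivity)]
    nlinarith
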